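/- Let K be an odd positive integer, ε ≥ 0, Δ ∈ [0,1), m ≥ 0 a real number, and γ : {0,…,K} → [0,1] arbitrary, and let f(p, p'; γ) = Σ_{l=0}^{(K−1)/2} ( e^{mε} α_l(p') − α_l(p) ) γ(l) + Σ_{l=(K+1)/2}^{K} ( α_l(p) − e^{mε} α_l(p') ) γ(l). Then: (i) for every permutation π of {1,…,K} and all p, p' ∈ [0,1]^K, f(p∘π, p'∘π; γ) = f(p, p'; γ); and (ii) there exists a finite set P of pairs of vectors (q, q') ∈ ([0,1]^K)², with cardinality |P| ≤ C(K+7, 7), such that every (q,q') ∈ P has (q_i, q_i') in the eight-element corner set C(ε,Δ) for all i, and for all p, p' ∈ [0,1]^K with (p_i, p_i') ∈ F(ε,Δ) for all i, f(p, p'; γ) ≤ max_{(q,q') ∈ P} f(q, q'; γ). Hence the infinitely many privacy constraints reduce to a set of constraints of size O(K^7). -/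

import Mathlib

open Finset

/-- Poisson–Binomial probability mass at `l` for parameters `p : Fin K → ℝ`. -/
noncomputable def alphaPB (K : ℕ) (p : Fin K → ℝ) (l : ℕ) : ℝ :=
  ∑ A ∈ Finset.powersetCard l (Finset.univ : Finset (Fin K)),
    (∏ i ∈ A, p i) * ∏ j ∈ Aᶜ, (1 - p j)

/-- The feasible region `F(ε,Δ)`: pairs `(p,p') ∈ [0,1]²` consistent with
`(ε,Δ)`-differential privacy. -/
def Feas (ε Δ p p' : ℝ) : Prop :=
  0 ≤ p ∧ p ≤ 1 ∧ 0 ≤ p' ∧ p' ≤ 1 ∧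
  p ≤ Real.exp ε * p' + Δ ∧ p' ≤ Real.exp ε * p + Δ ∧
  1 - p ≤ Real.exp ε * (1 - p') + Δ ∧ 1 - p' ≤ Real.exp ε * (1 - p) + Δ

/-- The eight corner points of the feasible region `F(ε,Δ)`. -/
noncomputable def Corners (ε Δ : ℝ) : Set (ℝ × ℝ) :=
  {(0, 0), (1, 1), (0, Δ), (Δ, 0), (1 - Δ, 1), (1, 1 - Δ),
   ((Real.exp ε + Δ) / (Real.exp ε + 1), (1 - Δ) / (Real.exp ε + 1)),
   ((1 - Δ) / (Real.exp ε + 1), (Real.exp ε + Δ) / (Real.exp ε + 1))}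

/-- The privacy cost objective `f(p, p'; γ)`. -/
noncomputable def privCost (K : ℕ) (m ε : ℝ) (γ : ℕ → ℝ) (p p' : Fin K → ℝ) : ℝ :=
  (∑ l ∈ Finset.range ((K + 1) / 2),
      (Real.exp (m * ε) * alphaPB K p' l - alphaPB K p l) * γ l)
  + ∑ l ∈ Finset.Icc ((K + 1) / 2) K,
      (alphaPB K p l - Real.exp (m * ε) * alphaPB K p' l) * γ l

lemma alphaPB_comp_perm (K : ℕ) (π : Equiv.Perm (Fin K)) (p : Fin K → ℝ) (l : ℕ) :
    alphaPB K (p ∘ π) l = alphaPB K p l := by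
  unfold alphaPB
  refine Finset.sum_nbij' (fun A => A.image π) (fun A => A.image π.symm) ?_ ?_ ?_ ?_ ?_
  · intro A hA
    simp only [Finset.mem_powersetCard] at hA ⊢
    exact ⟨Finset.subset_univ _, by rw [Finset.card_image_of_injective _ π.injective, hA.2]⟩
  · intro A hA
    simp only [Finset.mem_powersetCard] at hA ⊢
    exact ⟨Finset.subset_univ _, by rw [Finset.card_image_of_injective _ π.symm.injective, hA.2]⟩
  · intro A _
    ext x; simp
  · intro A _
    ext x; simp
  · intro A _
    have h1 : ∏ i ∈ A.image π, p i = ∏ i ∈ A, (p ∘ π) i :=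
      Finset.prod_image (fun a _ b _ h => π.injective h)
  -- compl image
    have hc : (A.image π)ᶜ = Aᶜ.image π := by
      ext x
      simp only [Finset.mem_compl, Finset.mem_image]
      constructor
      · intro hx
        exact ⟨π.symm x, fun h => hx ⟨π.symm x, h, by simp⟩, by simp⟩
      · rintro ⟨a, ha, rfl⟩ ⟨b, hb, hba⟩
        exact ha (π.injective hba ▸ hb)
    have h2 : ∏ j ∈ (A.image π)ᶜ, (1 - p j) = ∏ j ∈ Aᶜ, (1 - (p ∘ π) j) := by
      rw [hc]; exact Finset.prod_image (fun a _ b _ h => π.injective h)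
    rw [h1, h2]

def IsAff (F : ℝ → ℝ) : Prop := ∃ b c : ℝ, ∀ t, F t = b * t + c

lemma IsAff.sum {ι : Type*} (s : Finset ι) (F : ι → ℝ → ℝ) (h : ∀ a ∈ s, IsAff (F a)) :
    IsAff (fun t => ∑ a ∈ s, F a t) := by
  classical
  induction s using Finset.induction_on with
  | empty => exact ⟨0, 0, by simp⟩
  | insert a s hni ih =>
    obtain ⟨b1, c1, h1⟩ := h a (Finset.mem_insert_self a s)
    obtain ⟨b2, c2, h2⟩ := ih (fun x hx => h x (Finset.mem_insert_of_mem hx))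
    exact ⟨b1 + b2, c1 + c2, fun t => by
      dsimp only; rw [Finset.sum_insert hni, h1]; rw [show (∑ x ∈ s, F x t) = b2*t+c2 from h2 t]; ring⟩

lemma IsAff.const_mul (r : ℝ) (F : ℝ → ℝ) (h : IsAff F) : IsAff (fun t => r * F t) := by
  obtain ⟨b, c, hbc⟩ := h
  exact ⟨r * b, r * c, fun t => by dsimp only; rw [hbc]; ring⟩

lemma IsAff.mul_const (r : ℝ) (F : ℝ → ℝ) (h : IsAff F) : IsAff (fun t => F t * r) := by
  obtain ⟨b, c, hbc⟩ := h
  exact ⟨b * r, c * r, fun t => by dsimp only; rw [hbc]; ring⟩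

lemma IsAff.neg (F : ℝ → ℝ) (h : IsAff F) : IsAff (fun t => -F t) := by
  obtain ⟨b, c, hbc⟩ := h
  exact ⟨-b, -c, fun t => by dsimp only; rw [hbc]; ring⟩

lemma isAff_alphaPB (K : ℕ) (p : Fin K → ℝ) (i : Fin K) (l : ℕ) :
    IsAff (fun t => alphaPB K (Function.update p i t) l) := by
  unfold alphaPB
  refine IsAff.sum _ _ (fun A _ => ?_)
  by_cases hiA : i ∈ A
  · have hic : i ∉ Aᶜ := by simp [hiA]
    refine ⟨(∏ j ∈ A \ {i}, p j) * ∏ j ∈ Aᶜ, (1 - p j), 0, fun t => ?_⟩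
    have h1 : ∏ j ∈ A, Function.update p i t j = t * ∏ j ∈ A \ {i}, p j :=
      Finset.prod_update_of_mem hiA p t
    have h2 : ∏ j ∈ Aᶜ, (1 - Function.update p i t j) = ∏ j ∈ Aᶜ, (1 - p j) :=
      Finset.prod_congr rfl (fun j hj => by
        rw [Function.update_of_ne (by rintro rfl; exact hic hj)])
    dsimp only; rw [h1, h2]; ring
  · have hic : i ∈ Aᶜ := by simp [hiA]
    refine ⟨-((∏ j ∈ A, p j) * ∏ j ∈ Aᶜ \ {i}, (1 - p j)),
      (∏ j ∈ A, p j) * ∏ j ∈ Aᶜ \ {i}, (1 - p j), fun t => ?_⟩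
    have h1 : ∏ j ∈ A, Function.update p i t j = ∏ j ∈ A, p j :=
      Finset.prod_congr rfl (fun j hj => by
        rw [Function.update_of_ne (by rintro rfl; exact hiA hj)])
    have h2 : ∏ j ∈ Aᶜ, (1 - Function.update p i t j)
        = (1 - t) * ∏ j ∈ Aᶜ \ {i}, (1 - p j) := by
      have : ∀ j ∈ Aᶜ, 1 - Function.update p i t j
          = Function.update (fun j => 1 - p j) i (1 - t) j := by
        intro j _
        by_cases hj : j = i
        · subst hj; simp
        · rw [Function.update_of_ne hj, Function.update_of_ne hj]
      rw [Finset.prod_congr rfl this, Finset.prod_update_of_mem hic]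
    dsimp only; rw [h1, h2]; ring

lemma Feas.swap {ε Δ p p' : ℝ} (h : Feas ε Δ p p') : Feas ε Δ p' p := by
  obtain ⟨a,b,c,d,e,f,g,h⟩ := h
  exact ⟨c,d,a,b,f,e,h,g⟩

lemma Corners.swap {ε Δ x y : ℝ} (h : (x, y) ∈ Corners ε Δ) : (y, x) ∈ Corners ε Δ := by
  simp only [Corners, Set.mem_insert_iff, Set.mem_singleton_iff, Prod.mk.injEq] at h ⊢
  tauto

/-- main 2D lemma, half case: b ≥ 0, c ≤ 0 -/
lemma corner_dom_aux {ε Δ b c p p' : ℝ} (hΔ0 : 0 ≤ Δ) (hΔ1 : Δ < 1)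
    (he : 1 ≤ Real.exp ε) (hb : 0 ≤ b) (hc : c ≤ 0) (h : Feas ε Δ p p') :
    ∃ x y, (x, y) ∈ Corners ε Δ ∧ b * p + c * p' ≤ b * x + c * y := by
  obtain ⟨hp0, hp1, hq0, hq1, h1, h2, h3, h4⟩ := h
  set e := Real.exp ε with hedef
  have hep : (0:ℝ) < e := lt_of_lt_of_le one_pos he
  have he1 : (0:ℝ) < e + 1 := by linarith
  set u := (1 - Δ) / (e + 1) with hu
  set v := (e + Δ) / (e + 1) with hv
  have huv : u * (e + 1) = 1 - Δ := div_mul_cancel₀ _ (ne_of_gt he1)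
  have hvv : v * (e + 1) = e + Δ := div_mul_cancel₀ _ (ne_of_gt he1)
  have huv1 : u + v = 1 := by
    rw [hu, hv, ← add_div, div_eq_one_iff_eq (ne_of_gt he1)]; ring
  have hmem7 : (v, u) ∈ Corners ε Δ := by
    simp only [Corners, Set.mem_insert_iff, Set.mem_singleton_iff]; tauto
  have hmem6 : ((1:ℝ), 1 - Δ) ∈ Corners ε Δ := by
    simp only [Corners, Set.mem_insert_iff, Set.mem_singleton_iff]; tauto
  have hmem4 : (Δ, (0:ℝ)) ∈ Corners ε Δ := by
    simp only [Corners, Set.mem_insert_iff, Set.mem_singleton_iff]; tauto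
  rcases le_or_gt p' u with hpu | hpu
  · -- p' ≤ u : use p ≤ e p' + Δ
    rcases le_or_gt 0 (b * e + c) with hs | hs
    · refine ⟨v, u, hmem7, ?_⟩
      nlinarith [mul_le_mul_of_nonneg_left h1 hb, mul_le_mul_of_nonneg_left hpu hs]
    · refine ⟨Δ, 0, hmem4, ?_⟩
      nlinarith [mul_le_mul_of_nonneg_left h1 hb, mul_le_mul_of_nonpos_right hq0 (le_of_lt hs)]
  · rcases le_or_gt p' (1 - Δ) with hpd | hpd
    · -- u ≤ p' ≤ 1-Δ : use e * (1 - p) ≥ 1 - p' - Δ, i.e. e*p ≤ e - 1 + p' + Δ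
      have h4' : e * p ≤ e - 1 + p' + Δ := by nlinarith
      rcases le_or_gt 0 (b + c * e) with hs | hs
      · refine ⟨1, 1 - Δ, hmem6, ?_⟩
        nlinarith [mul_le_mul_of_nonneg_left h4' hb, mul_le_mul_of_nonneg_left hpd hs]
      · refine ⟨v, u, hmem7, ?_⟩
        have key : e * (b * p + c * p') ≤ e * (b * v + c * u) := by
          nlinarith [mul_le_mul_of_nonneg_left h4' hb,
            mul_le_mul_of_nonpos_left (le_of_lt hpu) (le_of_lt hs), huv, hvv, huv1]
        exact le_of_mul_le_mul_left key hep
    · -- p' ≥ 1-Δ : use p ≤ 1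
      refine ⟨1, 1 - Δ, hmem6, ?_⟩
      nlinarith [mul_le_mul_of_nonneg_left hp1 hb, mul_le_mul_of_nonpos_left (le_of_lt hpd) hc]

lemma corner_dominates {ε Δ : ℝ} (hΔ0 : 0 ≤ Δ) (hΔ1 : Δ < 1) (hε : 0 ≤ ε)
    (b c p p' : ℝ) (h : Feas ε Δ p p') :
    ∃ x y, (x, y) ∈ Corners ε Δ ∧ b * p + c * p' ≤ b * x + c * y := by
  have he : 1 ≤ Real.exp ε := Real.one_le_exp hε
  have hF := h
  obtain ⟨hp0, hp1, hq0, hq1, -⟩ := hF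
  rcases le_or_gt 0 b with hb | hb <;> rcases le_or_gt 0 c with hc | hc
  · exact ⟨1, 1, by simp only [Corners, Set.mem_insert_iff, Set.mem_singleton_iff]; tauto,
      by nlinarith⟩
  · exact corner_dom_aux hΔ0 hΔ1 he hb (le_of_lt hc) h
  · obtain ⟨x, y, hmem, hle⟩ :=
      corner_dom_aux hΔ0 hΔ1 he hc (le_of_lt hb) (Feas.swap h)
    exact ⟨y, x, Corners.swap hmem, by linarith⟩
  · exact ⟨0, 0, by simp only [Corners, Set.mem_insert_iff, Set.mem_singleton_iff]; tauto,
      by nlinarith⟩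

noncomputable def cornerVec (ε Δ : ℝ) : Fin 8 → ℝ × ℝ := fun j =>
  match j with
  | 0 => (0,0) | 1 => (1,1) | 2 => (0,Δ) | 3 => (Δ,0)
  | 4 => (1-Δ,1) | 5 => (1,1-Δ)
  | 6 => ((Real.exp ε + Δ)/(Real.exp ε + 1), (1-Δ)/(Real.exp ε + 1))
  | 7 => ((1-Δ)/(Real.exp ε + 1), (Real.exp ε + Δ)/(Real.exp ε + 1))
lemma cornerVec_mem (ε Δ : ℝ) (j : Fin 8) : cornerVec ε Δ j ∈ Corners ε Δ := by
  fin_cases j <;> simp [cornerVec, Corners]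
lemma mem_corners_iff (ε Δ : ℝ) (z : ℝ × ℝ) :
    z ∈ Corners ε Δ ↔ ∃ j : Fin 8, cornerVec ε Δ j = z := by
  constructor
  · intro h
    simp only [Corners, Set.mem_insert_iff, Set.mem_singleton_iff] at h
    rcases h with h|h|h|h|h|h|h|h
    exacts [⟨0, h.symm⟩, ⟨1, h.symm⟩, ⟨2, h.symm⟩, ⟨3, h.symm⟩, ⟨4, h.symm⟩,
      ⟨5, h.symm⟩, ⟨6, h.symm⟩, ⟨7, h.symm⟩]
  · rintro ⟨j, rfl⟩; exact cornerVec_mem ε Δ j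

set_option maxHeartbeats 1000000 in
lemma corners_feas {ε Δ : ℝ} (hε : 0 ≤ ε) (hΔ0 : 0 ≤ Δ) (hΔ1 : Δ < 1)
    {x y : ℝ} (h : (x, y) ∈ Corners ε Δ) : Feas ε Δ x y := by
  have he : 1 ≤ Real.exp ε := Real.one_le_exp hε
  set e := Real.exp ε with hedef
  have he1 : (0:ℝ) < e + 1 := by linarith
  have hu : (1 - Δ) / (e + 1) * (e + 1) = 1 - Δ := div_mul_cancel₀ _ (ne_of_gt he1)
  have hv : (e + Δ) / (e + 1) * (e + 1) = e + Δ := div_mul_cancel₀ _ (ne_of_gt he1)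
  have hsum : (1 - Δ) / (e + 1) + (e + Δ) / (e + 1) = 1 := by
    rw [← add_div, div_eq_one_iff_eq (ne_of_gt he1)]; ring
  have hu0 : 0 ≤ (1 - Δ) / (e + 1) := div_nonneg (by linarith) (le_of_lt he1)
  have hv0 : 0 ≤ (e + Δ) / (e + 1) := div_nonneg (by linarith) (le_of_lt he1)
  have hu1 : (1 - Δ) / (e + 1) ≤ 1 := by rw [div_le_one he1]; linarith
  have hv1 : (e + Δ) / (e + 1) ≤ 1 := by rw [div_le_one he1]; linarith
  simp only [Corners, Set.mem_insert_iff, Set.mem_singleton_iff, Prod.mk.injEq] at h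
  rcases h with ⟨rfl,rfl⟩|⟨rfl,rfl⟩|⟨rfl,rfl⟩|⟨rfl,rfl⟩|⟨rfl,rfl⟩|⟨rfl,rfl⟩|⟨rfl,rfl⟩|⟨rfl,rfl⟩ <;>
    refine ⟨?_, ?_, ?_, ?_, ?_, ?_, ?_, ?_⟩ <;>
    first
    | linarith
    | nlinarith [hu, hv, hsum, he, hu0, hv0, hu1, hv1, hΔ0, hΔ1]


lemma IsAff.add (F G : ℝ → ℝ) (hF : IsAff F) (hG : IsAff G) : IsAff (fun t => F t + G t) := by
  obtain ⟨b1, c1, h1⟩ := hF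
  obtain ⟨b2, c2, h2⟩ := hG
  exact ⟨b1 + b2, c1 + c2, fun t => by dsimp only; rw [h1, h2]; ring⟩

noncomputable def phiP (K : ℕ) (γ : ℕ → ℝ) (q : Fin K → ℝ) : ℝ :=
  (∑ l ∈ Finset.range ((K + 1) / 2), -(alphaPB K q l * γ l))
  + ∑ l ∈ Finset.Icc ((K + 1) / 2) K, alphaPB K q l * γ l

noncomputable def phiQ (K : ℕ) (m ε : ℝ) (γ : ℕ → ℝ) (q : Fin K → ℝ) : ℝ :=
  (∑ l ∈ Finset.range ((K + 1) / 2), Real.exp (m * ε) * alphaPB K q l * γ l)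
  + ∑ l ∈ Finset.Icc ((K + 1) / 2) K, -(Real.exp (m * ε) * alphaPB K q l * γ l)

lemma privCost_eq (K : ℕ) (m ε : ℝ) (γ : ℕ → ℝ) (p p' : Fin K → ℝ) :
    privCost K m ε γ p p' = phiP K γ p + phiQ K m ε γ p' := by
  unfold privCost phiP phiQ
  have h1 : (∑ l ∈ Finset.range ((K + 1) / 2),
      (Real.exp (m * ε) * alphaPB K p' l - alphaPB K p l) * γ l)
      = (∑ l ∈ Finset.range ((K + 1) / 2), -(alphaPB K p l * γ l))
        + ∑ l ∈ Finset.range ((K + 1) / 2), Real.exp (m * ε) * alphaPB K p' l * γ l := by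
    rw [← Finset.sum_add_distrib]
    exact Finset.sum_congr rfl (fun l _ => by ring)
  have h2 : (∑ l ∈ Finset.Icc ((K + 1) / 2) K,
      (alphaPB K p l - Real.exp (m * ε) * alphaPB K p' l) * γ l)
      = (∑ l ∈ Finset.Icc ((K + 1) / 2) K, alphaPB K p l * γ l)
        + ∑ l ∈ Finset.Icc ((K + 1) / 2) K, -(Real.exp (m * ε) * alphaPB K p' l * γ l) := by
    rw [← Finset.sum_add_distrib]
    exact Finset.sum_congr rfl (fun l _ => by ring)
  rw [h1, h2]; ring

lemma isAff_phiP (K : ℕ) (γ : ℕ → ℝ) (p : Fin K → ℝ) (i : Fin K) :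
    IsAff (fun t => phiP K γ (Function.update p i t)) := by
  unfold phiP
  exact IsAff.add _ _
    (IsAff.sum _ _ (fun l _ => IsAff.neg _ (IsAff.mul_const _ _ (isAff_alphaPB K p i l))))
    (IsAff.sum _ _ (fun l _ => IsAff.mul_const _ _ (isAff_alphaPB K p i l)))

lemma isAff_phiQ (K : ℕ) (m ε : ℝ) (γ : ℕ → ℝ) (p : Fin K → ℝ) (i : Fin K) :
    IsAff (fun t => phiQ K m ε γ (Function.update p i t)) := by
  unfold phiQ
  have base : ∀ l, IsAff (fun t => Real.exp (m * ε) * alphaPB K (Function.update p i t) l * γ l) :=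
    fun l => IsAff.mul_const _ _ (IsAff.const_mul _ _ (isAff_alphaPB K p i l))
  exact IsAff.add _ _
    (IsAff.sum _ _ (fun l _ => base l))
    (IsAff.sum _ _ (fun l _ => IsAff.neg _ (base l)))

lemma push_coord {K : ℕ} {m ε Δ : ℝ} {γ : ℕ → ℝ} (hε : 0 ≤ ε) (hΔ0 : 0 ≤ Δ) (hΔ1 : Δ < 1)
    (p p' : Fin K → ℝ) (i : Fin K) (hfeas : Feas ε Δ (p i) (p' i)) :
    ∃ x y, (x, y) ∈ Corners ε Δ ∧
      privCost K m ε γ p p' ≤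
        privCost K m ε γ (Function.update p i x) (Function.update p' i y) := by
  obtain ⟨bp, cp, hp⟩ := isAff_phiP K γ p i
  obtain ⟨bq, cq, hq⟩ := isAff_phiQ K m ε γ p' i
  obtain ⟨x, y, hmem, hle⟩ := corner_dominates hΔ0 hΔ1 hε bp bq (p i) (p' i) hfeas
  refine ⟨x, y, hmem, ?_⟩
  have ep : phiP K γ p = bp * p i + cp := by
    conv_lhs => rw [← Function.update_eq_self i p]
    exact hp (p i)
  have eq' : phiQ K m ε γ p' = bq * p' i + cq := by
    conv_lhs => rw [← Function.update_eq_self i p']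
    exact hq (p' i)
  have hpx := hp x
  have hqy := hq y
  dsimp only at hpx hqy
  rw [privCost_eq, privCost_eq, ep, eq', hpx, hqy]
  linarith

lemma push_all {K : ℕ} {m ε Δ : ℝ} {γ : ℕ → ℝ} (hε : 0 ≤ ε) (hΔ0 : 0 ≤ Δ) (hΔ1 : Δ < 1)
    (S : Finset (Fin K)) :
    ∀ p p' : Fin K → ℝ, (∀ j, Feas ε Δ (p j) (p' j)) →
      (∀ j ∉ S, (p j, p' j) ∈ Corners ε Δ) →
      ∃ q q' : Fin K → ℝ, (∀ j, (q j, q' j) ∈ Corners ε Δ) ∧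
        privCost K m ε γ p p' ≤ privCost K m ε γ q q' := by
  classical
  induction S using Finset.induction_on with
  | empty =>
    intro p p' _ hc
    exact ⟨p, p', fun j => hc j (by simp), le_refl _⟩
  | insert a S hni ih =>
    intro p p' hf hc
    obtain ⟨x, y, hmem, hle⟩ := push_coord (m := m) (γ := γ) hε hΔ0 hΔ1 p p' a (hf a)
    have hfeas' : ∀ j, Feas ε Δ (Function.update p a x j) (Function.update p' a y j) := by
      intro j
      by_cases hj : j = a
      · subst hj; simp only [Function.update_self]
        exact corners_feas hε hΔ0 hΔ1 hmem
      · simp only [Function.update_of_ne hj]; exact hf j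
    have hcorn' : ∀ j ∉ S, (Function.update p a x j, Function.update p' a y j) ∈ Corners ε Δ := by
      intro j hj
      by_cases hja : j = a
      · subst hja; simp only [Function.update_self]; exact hmem
      · simp only [Function.update_of_ne hja]
        exact hc j (by simp [hja, hj])
    obtain ⟨q, q', hq, hle2⟩ := ih _ _ hfeas' hcorn'
    exact ⟨q, q', hq, le_trans hle hle2⟩

lemma card_monotone_le (K : ℕ) :
    ((Finset.univ : Finset (Fin K → Fin 8)).filter (fun c => Monotone c)).card
      ≤ (K + 7).choose 7 := by
  classical
  have key : ((Finset.univ : Finset (Fin K → Fin 8)).filter (fun c => Monotone c)).card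
      ≤ (Finset.powersetCard K (Finset.univ : Finset (Fin (K + 7)))).card := by
    have hbound : ∀ c : Fin K → Fin 8, ∀ i : Fin K, (c i : ℕ) + (i : ℕ) < K + 7 := by
      intro c i
      have h1 : (c i : ℕ) < 8 := (c i).isLt
      have h2 : (i : ℕ) < K := i.isLt
      omega
    set emb : (Fin K → Fin 8) → Fin K → Fin (K + 7) :=
      fun c i => ⟨(c i : ℕ) + (i : ℕ), hbound c i⟩ with hemb
    have hsm : ∀ c : Fin K → Fin 8, Monotone c → StrictMono (emb c) := by
      intro c hc i j hij
      have h1 : (c i : ℕ) ≤ (c j : ℕ) := hc (le_of_lt hij)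
      have h2 : (i : ℕ) < (j : ℕ) := hij
      simp only [hemb, Fin.mk_lt_mk]
      omega
    apply Finset.card_le_card_of_injOn (fun c => Finset.image (emb c) Finset.univ)
    · intro c hc
      simp only [Finset.coe_filter, Set.mem_setOf_eq] at hc
      rw [Finset.mem_coe, Finset.mem_powersetCard]
      refine ⟨Finset.subset_univ _, ?_⟩
      rw [Finset.card_image_of_injective _ (hsm c hc.2).injective, Finset.card_univ,
        Fintype.card_fin]
    · intro c hcmem d hdmem himg
      dsimp only at himg
      simp only [Finset.coe_filter, Set.mem_setOf_eq] at hcmem hdmem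
      have hcard : (Finset.image (emb c) Finset.univ).card = K := by
        rw [Finset.card_image_of_injective _ (hsm c hcmem.2).injective, Finset.card_univ,
          Fintype.card_fin]
      have hc1 : emb c = (Finset.image (emb c) Finset.univ).orderEmbOfFin hcard :=
        Finset.orderEmbOfFin_unique hcard
          (fun x => Finset.mem_image_of_mem _ (Finset.mem_univ x)) (hsm c hcmem.2)
      have hcard2 : (Finset.image (emb c) Finset.univ).card = K := hcard
      have hd1 : emb d = (Finset.image (emb c) Finset.univ).orderEmbOfFin hcard := by
        refine Finset.orderEmbOfFin_unique hcard ?_ (hsm d hdmem.2)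
        intro x
        rw [himg]
        exact Finset.mem_image_of_mem _ (Finset.mem_univ x)
      have hce : emb c = emb d := hc1.trans hd1.symm
      funext i
      have := congrFun hce i
      simp only [hemb, Fin.mk.injEq] at this
      exact Fin.val_injective (by omega)
  calc ((Finset.univ : Finset (Fin K → Fin 8)).filter (fun c => Monotone c)).card
      ≤ (Finset.powersetCard K (Finset.univ : Finset (Fin (K + 7)))).card := key
    _ = (K + 7).choose K := by
        rw [Finset.card_powersetCard, Finset.card_univ, Fintype.card_fin]
    _ = (K + 7).choose 7 := by
        have h7 : (K + 7) - 7 = K := by omega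
        rw [show (K + 7).choose K = (K + 7).choose ((K + 7) - 7) by rw [h7]]
        exact Nat.choose_symm (by omega)


/-- (i) the privacy cost objective is invariant under simultaneous
permutation of the coordinates of `p` and `p'`; (ii) the infinitely many privacy
constraints reduce to a finite set `P` of at most `C(K+7,7)` corner-point pairs:
the objective on every feasible pair is dominated by its value at some element
of `P`. -/
theorem statement7 (K : ℕ) (hK : Odd K) (hKpos : 0 < K)
    (ε Δ m : ℝ) (hε : 0 ≤ ε) (hΔ0 : 0 ≤ Δ) (hΔ1 : Δ < 1) (hm : 0 ≤ m)
    (γ : ℕ → ℝ) (hγ01 : ∀ l ≤ K, 0 ≤ γ l ∧ γ l ≤ 1) :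
    (∀ (π : Equiv.Perm (Fin K)) (p p' : Fin K → ℝ),
        privCost K m ε γ (p ∘ π) (p' ∘ π) = privCost K m ε γ p p')
    ∧ ∃ P : Finset ((Fin K → ℝ) × (Fin K → ℝ)),
        P.card ≤ (K + 7).choose 7 ∧
        (∀ qq ∈ P, ∀ i, (qq.1 i, qq.2 i) ∈ Corners ε Δ) ∧
        ∀ p p' : Fin K → ℝ, (∀ i, Feas ε Δ (p i) (p' i)) →
          ∃ qq ∈ P, privCost K m ε γ p p' ≤ privCost K m ε γ qq.1 qq.2 := by
    classical
  have perm_inv : ∀ (π : Equiv.Perm (Fin K)) (p p' : Fin K → ℝ),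
      privCost K m ε γ (p ∘ π) (p' ∘ π) = privCost K m ε γ p p' := by
    intro π p p'
    unfold privCost
    simp only [alphaPB_comp_perm]
  refine ⟨perm_inv, ?_⟩
  set g : (Fin K → Fin 8) → (Fin K → ℝ) × (Fin K → ℝ) :=
    fun c => (fun i => (cornerVec ε Δ (c i)).1, fun i => (cornerVec ε Δ (c i)).2) with hg
  set P : Finset ((Fin K → ℝ) × (Fin K → ℝ)) :=
    ((Finset.univ : Finset (Fin K → Fin 8)).filter (fun c => Monotone c)).image g with hP
  refine ⟨P, ?_, ?_, ?_⟩
  · exact le_trans (Finset.card_image_le) (card_monotone_le K)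
  · intro qq hqq i
    rw [hP, Finset.mem_image] at hqq
    obtain ⟨c, -, rfl⟩ := hqq
    simp only [hg]
    exact cornerVec_mem ε Δ (c i)
  · intro p p' hfeas
    obtain ⟨q, q', hq, hle⟩ :=
      push_all (m := m) (γ := γ) hε hΔ0 hΔ1 Finset.univ p p' hfeas
        (fun j hj => absurd (Finset.mem_univ j) hj)
    have hcx : ∀ j, ∃ k : Fin 8, cornerVec ε Δ k = (q j, q' j) :=
      fun j => (mem_corners_iff ε Δ _).mp (hq j)
    choose c hc using hcx
    set σ := Tuple.sort c with hσ
    have hmono : Monotone (c ∘ σ) := Tuple.monotone_sort c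
    refine ⟨g (c ∘ σ), ?_, ?_⟩
    · rw [hP, Finset.mem_image]
      exact ⟨c ∘ σ, Finset.mem_filter.mpr ⟨Finset.mem_univ _, hmono⟩, rfl⟩
    · have h1 : (g (c ∘ σ)).1 = q ∘ σ := by
        funext i
        simp only [hg, Function.comp_apply]
        rw [hc (σ i)]
      have h2 : (g (c ∘ σ)).2 = q' ∘ σ := by
        funext i
        simp only [hg, Function.comp_apply]
        rw [hc (σ i)]
      rw [h1, h2, perm_inv σ q q']
      exact hle
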